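/- Let q ∈ ℂ* not be a root of unity, let I ⊆ A_q be a nonzero left ideal and M = A_q/I. Then the rank of M as a module over A = ℂ[z,z⁻¹] (i.e., the dimension of K(A) ⊗_A M over the fraction field K(A)) equals the minimum of deg_σ(w) over nonzero w ∈ I. In particular, rk_A(M) is finite. -/

import Mathlib

open LaurentPolynomial

noncomputable section

/-- The `σ`-degree of an element of the quantum torus `A_q`, presented via its canonical
`ℂ`-basis `z^m σ^n` indexed by `ℤ × ℤ`. -/
def sigmaDeg {D : Type*} [Ring D] [Algebra ℂ D] (B : Module.Basis (ℤ × ℤ) ℂ D) (x : D) : ℤ :=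
  (WithBot.unbotD 0 ((B.repr x).support.image Prod.snd).max) -
    (WithTop.untopD 0 ((B.repr x).support.image Prod.snd).min)

/-- The canonical embedding of `A = ℂ[z,z⁻¹]` into the quantum torus, `g(z) ↦ g(Z)`. -/
def embA {D : Type*} [Ring D] [Algebra ℂ D] (zd : Dˣ) (g : LaurentPolynomial ℂ) : D :=
  Finsupp.sum g.coeff fun n a => a • ((zd ^ n : Dˣ) : D)

/-- A family of elements of `M = A_q/I` is linearly independent over `A = ℂ[z,z⁻¹]`
(acting through the embedding `A → A_q`). -/
def AIndep {D : Type*} [Ring D] [Algebra ℂ D] (zd : Dˣ) (I : Submodule D D)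
    {k : ℕ} (v : Fin k → D ⧸ I) : Prop :=
  ∀ g : Fin k → LaurentPolynomial ℂ, (∑ i, embA zd (g i) • v i) = 0 → ∀ i, g i = 0
namespace Stmt6

variable {D : Type*} [Ring D] [Algebra ℂ D]

def Z (zd : Dˣ) (a : ℤ) : D := ((zd ^ a : Dˣ) : D)

lemma Z_add (zd : Dˣ) (a b : ℤ) : Z zd (a + b) = Z zd a * Z zd b := by
  simp [Z, zpow_add]

lemma Z_zero (zd : Dˣ) : Z zd 0 = 1 := by simp [Z]

lemma Z_one (zd : Dˣ) : Z zd 1 = (zd : D) := by simp [Z]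

lemma Z_mul_Z_neg (zd : Dˣ) (a : ℤ) : Z zd a * Z zd (-a) = 1 := by
  rw [← Z_add]; simp [Z_zero]

variable {q : ℂ} {zd σd : Dˣ}

section comm
variable (hq0 : q ≠ 0) (hrel : (σd : D) * (zd : D) = q • ((zd : D) * (σd : D)))
include hq0 hrel

lemma sigma_z_neg_one : (σd : D) * Z zd (-1) = q⁻¹ • (Z zd (-1) * (σd : D)) := by
  have hz : (zd : D) * Z zd (-1) = 1 := by rw [← Z_one, Z_mul_Z_neg]
  have hz' : Z zd (-1) * (zd : D) = 1 := by
    rw [← Z_one, ← Z_add]; simp [Z_zero]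
  have h1 : Z zd (-1) * (σd : D) = q • ((σd : D) * Z zd (-1)) := by
    calc Z zd (-1) * (σd : D) = Z zd (-1) * ((σd : D) * ((zd : D) * Z zd (-1))) := by
          rw [hz, mul_one]
      _ = Z zd (-1) * (((σd : D) * (zd : D)) * Z zd (-1)) := by rw [mul_assoc]
      _ = Z zd (-1) * ((q • ((zd : D) * (σd : D))) * Z zd (-1)) := by rw [hrel]
      _ = q • (Z zd (-1) * (zd : D) * ((σd : D) * Z zd (-1))) := by
          rw [smul_mul_assoc, mul_smul_comm]; noncomm_ring
      _ = q • ((σd : D) * Z zd (-1)) := by rw [hz', one_mul]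
  calc (σd : D) * Z zd (-1) = (q⁻¹ * q) • ((σd : D) * Z zd (-1)) := by
        rw [inv_mul_cancel₀ hq0, one_smul]
    _ = q⁻¹ • (q • ((σd : D) * Z zd (-1))) := by rw [smul_smul]
    _ = q⁻¹ • (Z zd (-1) * (σd : D)) := by rw [← h1]

lemma sigma_Z (a : ℤ) : (σd : D) * Z zd a = q ^ a • (Z zd a * (σd : D)) := by
  induction a using Int.induction_on with
  | zero => simp [Z_zero]
  | succ i ih =>
      have hZ : Z zd (i + 1) = Z zd i * Z zd 1 := Z_add zd i 1
      calc (σd : D) * Z zd (i + 1) = ((σd : D) * Z zd i) * Z zd 1 := by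
            rw [hZ, mul_assoc]
        _ = (q ^ (i : ℤ) • (Z zd i * (σd : D))) * Z zd 1 := by rw [ih]
        _ = q ^ (i : ℤ) • (Z zd i * ((σd : D) * (zd : D))) := by
            rw [smul_mul_assoc, Z_one, mul_assoc]
        _ = q ^ (i : ℤ) • (Z zd i * (q • ((zd : D) * (σd : D)))) := by rw [hrel]
        _ = (q ^ (i : ℤ) * q) • (Z zd i * Z zd 1 * (σd : D)) := by
            rw [mul_smul_comm, smul_smul, Z_one, mul_assoc]
        _ = q ^ ((i : ℤ) + 1) • (Z zd (i + 1) * (σd : D)) := by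
            rw [zpow_add_one₀ hq0, hZ]
  | pred i ih =>
      have hZ : Z zd (-(i : ℤ) - 1) = Z zd (-i) * Z zd (-1) := by
        rw [← Z_add]; ring_nf
      calc (σd : D) * Z zd (-(i : ℤ) - 1) = ((σd : D) * Z zd (-i)) * Z zd (-1) := by
            rw [hZ, mul_assoc]
        _ = (q ^ (-(i : ℤ)) • (Z zd (-i) * (σd : D))) * Z zd (-1) := by rw [ih]
        _ = q ^ (-(i : ℤ)) • (Z zd (-i) * ((σd : D) * Z zd (-1))) := by
            rw [smul_mul_assoc, mul_assoc]
        _ = q ^ (-(i : ℤ)) • (Z zd (-i) * (q⁻¹ • (Z zd (-1) * (σd : D)))) := by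
            rw [sigma_z_neg_one hq0 hrel]
        _ = (q ^ (-(i : ℤ)) * q⁻¹) • (Z zd (-i) * Z zd (-1) * (σd : D)) := by
            rw [mul_smul_comm, smul_smul, mul_assoc]
        _ = q ^ (-(i : ℤ) - 1) • (Z zd (-(i : ℤ) - 1) * (σd : D)) := by
            rw [zpow_sub_one₀ hq0, hZ]

lemma sigma_inv_Z (a : ℤ) :
    ((σd⁻¹ : Dˣ) : D) * Z zd a = q ^ (-a) • (Z zd a * ((σd⁻¹ : Dˣ) : D)) := by
  have hs : ((σd⁻¹ : Dˣ) : D) * (σd : D) = 1 := by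
    rw [← Units.val_mul, inv_mul_cancel σd, Units.val_one]
  have hs' : (σd : D) * ((σd⁻¹ : Dˣ) : D) = 1 := by
    rw [← Units.val_mul, mul_inv_cancel σd, Units.val_one]
  have h1 := sigma_Z hq0 hrel a
  have h2 : Z zd a * ((σd⁻¹ : Dˣ) : D)
      = q ^ a • (((σd⁻¹ : Dˣ) : D) * Z zd a) := by
    calc Z zd a * ((σd⁻¹ : Dˣ) : D)
        = ((σd⁻¹ : Dˣ) : D) * (((σd : D) * Z zd a) * ((σd⁻¹ : Dˣ) : D)) := by
          rw [← mul_assoc, ← mul_assoc, hs, one_mul]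
      _ = ((σd⁻¹ : Dˣ) : D) * ((q ^ a • (Z zd a * (σd : D))) * ((σd⁻¹ : Dˣ) : D)) := by
          rw [h1]
      _ = q ^ a • (((σd⁻¹ : Dˣ) : D) * (Z zd a * ((σd : D) * ((σd⁻¹ : Dˣ) : D)))) := by
          simp only [smul_mul_assoc, mul_smul_comm, mul_assoc]
      _ = q ^ a • (((σd⁻¹ : Dˣ) : D) * Z zd a) := by rw [hs', mul_one]
  calc ((σd⁻¹ : Dˣ) : D) * Z zd a
      = (q ^ (-a) * q ^ a) • (((σd⁻¹ : Dˣ) : D) * Z zd a) := by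
        rw [← zpow_add₀ hq0]; simp
    _ = q ^ (-a) • (q ^ a • (((σd⁻¹ : Dˣ) : D) * Z zd a)) := by rw [smul_smul]
    _ = q ^ (-a) • (Z zd a * ((σd⁻¹ : Dˣ) : D)) := by rw [← h2]

lemma Sp_Z (b a : ℤ) :
    Z σd b * Z zd a = q ^ (b * a) • (Z zd a * Z σd b) := by
  induction b using Int.induction_on with
  | zero => simp [Z_zero]
  | succ i ih =>
      have hS : Z σd ((i : ℤ) + 1) = Z σd 1 * Z σd i := by
        rw [← Z_add]; ring_nf
      calc Z σd ((i : ℤ) + 1) * Z zd a = (σd : D) * (Z σd i * Z zd a) := by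
            rw [hS, Z_one, mul_assoc]
        _ = (σd : D) * (q ^ ((i : ℤ) * a) • (Z zd a * Z σd i)) := by rw [ih]
        _ = q ^ ((i : ℤ) * a) • (((σd : D) * Z zd a) * Z σd i) := by
            rw [mul_smul_comm, mul_assoc]
        _ = q ^ ((i : ℤ) * a) • ((q ^ a • (Z zd a * (σd : D))) * Z σd i) := by
            rw [sigma_Z hq0 hrel]
        _ = (q ^ ((i : ℤ) * a) * q ^ a) • (Z zd a * (Z σd 1 * Z σd i)) := by
            rw [smul_mul_assoc, smul_smul, Z_one, mul_assoc]
        _ = q ^ (((i : ℤ) + 1) * a) • (Z zd a * Z σd ((i : ℤ) + 1)) := by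
            rw [← zpow_add₀ hq0, hS]; ring_nf
  | pred i ih =>
      have hS : Z σd (-(i : ℤ) - 1) = Z σd (-1) * Z σd (-i) := by
        rw [← Z_add]; ring_nf
      have hσ1 : Z σd (-1) = ((σd⁻¹ : Dˣ) : D) := by simp [Z]
      calc Z σd (-(i : ℤ) - 1) * Z zd a = ((σd⁻¹ : Dˣ) : D) * (Z σd (-i) * Z zd a) := by
            rw [hS, hσ1, mul_assoc]
        _ = ((σd⁻¹ : Dˣ) : D) * (q ^ (-(i : ℤ) * a) • (Z zd a * Z σd (-i))) := by rw [ih]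
        _ = q ^ (-(i : ℤ) * a) • ((((σd⁻¹ : Dˣ) : D) * Z zd a) * Z σd (-i)) := by
            rw [mul_smul_comm, mul_assoc]
        _ = q ^ (-(i : ℤ) * a) • ((q ^ (-a) • (Z zd a * ((σd⁻¹ : Dˣ) : D))) * Z σd (-i)) := by
            rw [sigma_inv_Z hq0 hrel]
        _ = (q ^ (-(i : ℤ) * a) * q ^ (-a)) • (Z zd a * (Z σd (-1) * Z σd (-i))) := by
            rw [smul_mul_assoc, smul_smul, hσ1, mul_assoc]
        _ = q ^ ((-(i : ℤ) - 1) * a) • (Z zd a * Z σd (-(i : ℤ) - 1)) := by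
            rw [← zpow_add₀ hq0, hS]; ring_nf

lemma Sp_Z_Sp (b a j : ℤ) :
    Z σd b * (Z zd a * Z σd j) = q ^ (b * a) • (Z zd a * Z σd (b + j)) := by
  calc Z σd b * (Z zd a * Z σd j) = (Z σd b * Z zd a) * Z σd j := by rw [mul_assoc]
    _ = (q ^ (b * a) • (Z zd a * Z σd b)) * Z σd j := by rw [Sp_Z hq0 hrel]
    _ = q ^ (b * a) • (Z zd a * Z σd (b + j)) := by
        rw [smul_mul_assoc, mul_assoc, ← Z_add]

end comm
end Stmt6
set_option linter.unusedSectionVars false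

namespace Stmt6

variable {D : Type*} [Ring D] [Algebra ℂ D]

section emb
variable (zd : Dˣ)

def F : LaurentPolynomial ℂ →ₐ[ℂ] D :=
  AddMonoidAlgebra.lift ℂ D ℤ ((Units.coeHom D).comp (zpowersHom Dˣ zd))

lemma F_single (a : ℤ) (c : ℂ) : F zd (AddMonoidAlgebra.single a c) = c • Z zd a := by
  rw [F]
  have := AddMonoidAlgebra.lift_single ((Units.coeHom D).comp (zpowersHom Dˣ zd)) a c
  simpa [Z] using this

lemma embA_single (a : ℤ) (c : ℂ) : embA zd (AddMonoidAlgebra.single a c) = c • Z zd a := by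
  unfold embA
  rw [AddMonoidAlgebra.coeff_single, Finsupp.sum_single_index (by simp)]
  rfl

lemma embA_add (g h : LaurentPolynomial ℂ) :
    embA zd (g + h) = embA zd g + embA zd h := by
  unfold embA
  rw [AddMonoidAlgebra.coeff_add]
  exact Finsupp.sum_add_index' (by simp) (fun a b₁ b₂ => add_smul b₁ b₂ _)

lemma embA_zero : embA zd (0 : LaurentPolynomial ℂ) = 0 := by
  unfold embA; simp

lemma embA_eq_F (g : LaurentPolynomial ℂ) : embA zd g = F zd g := by
  induction g using AddMonoidAlgebra.induction with
  | zero => rw [embA_zero, map_zero]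
  | single_add a b f _ _ ih => rw [embA_add, map_add, ih, embA_single, F_single]

lemma embA_mul (g h : LaurentPolynomial ℂ) :
    embA zd (g * h) = embA zd g * embA zd h := by
  rw [embA_eq_F, embA_eq_F, embA_eq_F, map_mul]

lemma embA_one : embA zd (1 : LaurentPolynomial ℂ) = 1 := by
  rw [embA_eq_F, map_one]

lemma embA_sum {ι : Type*} (s : Finset ι) (g : ι → LaurentPolynomial ℂ) :
    embA zd (∑ i ∈ s, g i) = ∑ i ∈ s, embA zd (g i) := by
  simp only [embA_eq_F, map_sum]

end emb

section twist

def tw (q : ℂ) (b : ℤ) (g : LaurentPolynomial ℂ) : LaurentPolynomial ℂ :=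
  g.coeff.sum fun p c => AddMonoidAlgebra.single p (q ^ (b * p) * c)

lemma tw_apply (q : ℂ) (b : ℤ) (g : LaurentPolynomial ℂ) (p : ℤ) :
    (tw q b g).coeff p = q ^ (b * p) * g.coeff p := by
  classical
  rw [tw, AddMonoidAlgebra.coeff_finsuppSum, Finsupp.sum_apply, Finsupp.sum]
  simp only [AddMonoidAlgebra.coeff_single, Finsupp.single_apply]
  rw [Finset.sum_ite_eq' g.coeff.support p (fun p' => q ^ (b * p') * g.coeff p')]
  by_cases h : p ∈ g.coeff.support
  · rw [if_pos h]
  · rw [if_neg h, Finsupp.notMem_support_iff.mp h, mul_zero]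

lemma tw_add (q : ℂ) (b : ℤ) (g h : LaurentPolynomial ℂ) :
    tw q b (g + h) = tw q b g + tw q b h := by
  ext p
  rw [AddMonoidAlgebra.coeff_add, Finsupp.add_apply, tw_apply, tw_apply, tw_apply,
    AddMonoidAlgebra.coeff_add, Finsupp.add_apply, mul_add]

lemma tw_zero (q : ℂ) (b : ℤ) : tw q b (0 : LaurentPolynomial ℂ) = 0 := by
  ext p; simp [tw_apply]

lemma tw_single (q : ℂ) (b : ℤ) (a : ℤ) (c : ℂ) :
    tw q b (AddMonoidAlgebra.single a c) = AddMonoidAlgebra.single a (q ^ (b * a) * c) := by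
  ext p
  rw [tw_apply]
  simp only [AddMonoidAlgebra.coeff_single, Finsupp.single_apply]
  split_ifs with h
  · subst h; rfl
  · exact mul_zero _

lemma tw_ne_zero {q : ℂ} (hq0 : q ≠ 0) (b : ℤ) {g : LaurentPolynomial ℂ} (hg : g ≠ 0) :
    tw q b g ≠ 0 := by
  intro h
  apply hg
  ext p
  have h2 : (tw q b g).coeff p = (0 : LaurentPolynomial ℂ).coeff p := by rw [h]
  rw [tw_apply, AddMonoidAlgebra.coeff_zero, Finsupp.zero_apply] at h2
  rw [AddMonoidAlgebra.coeff_zero, Finsupp.zero_apply]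
  exact (mul_eq_zero.mp h2).resolve_left (zpow_ne_zero _ hq0)

end twist

end Stmt6
namespace Stmt6
variable {D : Type*} [Ring D] [Algebra ℂ D]

section basisSec
variable {q : ℂ} (zd σd : Dˣ) (B : Module.Basis (ℤ × ℤ) ℂ D)

def coeffA (x : D) (j : ℤ) : LaurentPolynomial ℂ :=
  AddMonoidAlgebra.ofCoeff (Finsupp.comapDomain (fun p => (p, j)) (B.repr x)
    (fun a _ b _ h => (Prod.ext_iff.mp h).1))

lemma coeffA_apply (x : D) (j p : ℤ) : (coeffA B x j).coeff p = B.repr x (p, j) :=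
  Finsupp.comapDomain_apply _ _ _ _

lemma coeffA_sub (x y : D) (j : ℤ) :
    coeffA B (x - y) j = coeffA B x j - coeffA B y j := by
  ext p
  rw [AddMonoidAlgebra.coeff_sub, Finsupp.sub_apply, coeffA_apply, coeffA_apply, coeffA_apply,
    map_sub, Finsupp.sub_apply]

lemma coeffA_zero (j : ℤ) : coeffA B (0 : D) j = 0 := by
  ext p; rw [coeffA_apply]; simp

def SS (x : D) : Finset ℤ := (B.repr x).support.image Prod.snd

lemma mem_SS {x : D} {j : ℤ} : j ∈ SS B x ↔ coeffA B x j ≠ 0 := by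
  constructor
  · intro hj h0
    rw [SS, Finset.mem_image] at hj
    obtain ⟨pj, hpj, rfl⟩ := hj
    have h1 : (coeffA B x pj.2).coeff pj.1 = (0 : LaurentPolynomial ℂ).coeff pj.1 := by rw [h0]
    rw [coeffA_apply, AddMonoidAlgebra.coeff_zero, Finsupp.zero_apply] at h1
    exact (Finsupp.mem_support_iff.mp hpj) h1
  · intro h
    obtain ⟨p, hp⟩ := Finsupp.ne_iff.mp (mt AddMonoidAlgebra.coeff_eq_zero.mp h)
    rw [Finsupp.zero_apply, coeffA_apply] at hp
    rw [SS, Finset.mem_image]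
    exact ⟨(p, j), Finsupp.mem_support_iff.mpr hp, rfl⟩

lemma SS_nonempty {x : D} (hx : x ≠ 0) : (SS B x).Nonempty := by
  rw [SS]
  apply Finset.Nonempty.image
  rw [Finsupp.support_nonempty_iff]
  intro h0
  exact hx ((LinearEquiv.map_eq_zero_iff B.repr).mp h0)

lemma eq_zero_of_coeffA {x : D} (h : ∀ j, coeffA B x j = 0) : x = 0 := by
  have h0 : B.repr x = 0 := by
    ext pj
    have h1 : (coeffA B x pj.2).coeff pj.1 = (0 : LaurentPolynomial ℂ).coeff pj.1 := by
      rw [h pj.2]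
    rw [coeffA_apply, AddMonoidAlgebra.coeff_zero, Finsupp.zero_apply] at h1
    simpa using h1
  exact (LinearEquiv.map_eq_zero_iff B.repr).mp h0

lemma repr_embA_mul (hB : ∀ p : ℤ × ℤ, B p = ((zd ^ p.1 : Dˣ) : D) * ((σd ^ p.2 : Dˣ) : D)) (g : LaurentPolynomial ℂ) (j : ℤ) :
    B.repr (embA zd g * Z σd j) = Finsupp.mapDomain (fun a => (a, j)) g.coeff := by
  induction g using AddMonoidAlgebra.induction with
  | zero => rw [embA_zero, zero_mul, map_zero, AddMonoidAlgebra.coeff_zero, Finsupp.mapDomain_zero]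
  | single_add a c f _ _ ih =>
      rw [embA_add, add_mul, map_add, ih, AddMonoidAlgebra.coeff_add, Finsupp.mapDomain_add,
        embA_single, smul_mul_assoc, map_smul, AddMonoidAlgebra.coeff_single,
        Finsupp.mapDomain_single]
      congr 1
      have h1 : Z zd a * Z σd j = B (a, j) := (hB (a, j)).symm
      rw [h1, B.repr_self, Finsupp.smul_single, smul_eq_mul, mul_one]

lemma repr_sum_apply_eq (hB : ∀ p : ℤ × ℤ, B p = ((zd ^ p.1 : Dˣ) : D) * ((σd ^ p.2 : Dˣ) : D)) {ι : Type*} [Fintype ι] (h : ι → ℤ)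
    (hinj : Function.Injective h) (g : ι → LaurentPolynomial ℂ) (i₀ : ι) (p : ℤ) :
    B.repr (∑ i, embA zd (g i) * Z σd (h i)) (p, h i₀) = (g i₀).coeff p := by
  classical
  rw [map_sum, Finsupp.finset_sum_apply]
  have hterm : ∀ i, (B.repr (embA zd (g i) * Z σd (h i))) (p, h i₀)
      = if i = i₀ then (g i).coeff p else 0 := by
    intro i
    rw [repr_embA_mul zd σd B hB]
    split_ifs with hii
    · subst hii
      exact Finsupp.mapDomain_apply (fun a b hab => (Prod.ext_iff.mp hab).1) (g i).coeff p
    · apply Finsupp.mapDomain_of_notMem_range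
      rintro ⟨a, ha⟩
      exact hii (hinj (congrArg Prod.snd ha))
  simp only [hterm]
  rw [Finset.sum_ite_eq' Finset.univ i₀ (fun i => (g i).coeff p)]
  simp

lemma repr_sum_apply_ne (hB : ∀ p : ℤ × ℤ, B p = ((zd ^ p.1 : Dˣ) : D) * ((σd ^ p.2 : Dˣ) : D)) {ι : Type*} [Fintype ι] (h : ι → ℤ)
    (g : ι → LaurentPolynomial ℂ) (p j : ℤ) (hj : ∀ i, h i ≠ j) :
    B.repr (∑ i, embA zd (g i) * Z σd (h i)) (p, j) = 0 := by
  rw [map_sum, Finsupp.finset_sum_apply]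
  apply Finset.sum_eq_zero
  intro i _
  rw [repr_embA_mul zd σd B hB]
  apply Finsupp.mapDomain_of_notMem_range
  rintro ⟨a, ha⟩
  exact hj i (congrArg Prod.snd ha)

lemma coeffA_sum_eq (hB : ∀ p : ℤ × ℤ, B p = ((zd ^ p.1 : Dˣ) : D) * ((σd ^ p.2 : Dˣ) : D)) {ι : Type*} [Fintype ι] (h : ι → ℤ)
    (hinj : Function.Injective h) (g : ι → LaurentPolynomial ℂ) (i₀ : ι) :
    coeffA B (∑ i, embA zd (g i) * Z σd (h i)) (h i₀) = g i₀ := by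
  ext p
  rw [coeffA_apply, repr_sum_apply_eq zd σd B hB h hinj g i₀ p]

lemma coeffA_sum_ne (hB : ∀ p : ℤ × ℤ, B p = ((zd ^ p.1 : Dˣ) : D) * ((σd ^ p.2 : Dˣ) : D)) {ι : Type*} [Fintype ι] (h : ι → ℤ)
    (g : ι → LaurentPolynomial ℂ) (j : ℤ) (hj : ∀ i, h i ≠ j) :
    coeffA B (∑ i, embA zd (g i) * Z σd (h i)) j = 0 := by
  ext p
  rw [coeffA_apply, repr_sum_apply_ne zd σd B hB h g p j hj, AddMonoidAlgebra.coeff_zero,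
    Finsupp.zero_apply]

def CF (T : Finset ℤ) (φ : ℤ → LaurentPolynomial ℂ) : D :=
  ∑ j ∈ T, embA zd (φ j) * Z σd j

lemma CF_eq_sum_attach (T : Finset ℤ) (φ : ℤ → LaurentPolynomial ℂ) :
    CF zd σd T φ = ∑ i : {x // x ∈ T}, embA zd (φ i.1) * Z σd i.1 := by
  rw [CF, Finset.univ_eq_attach, Finset.sum_attach T (fun j => embA zd (φ j) * Z σd j)]

lemma coeffA_CF (hB : ∀ p : ℤ × ℤ, B p = ((zd ^ p.1 : Dˣ) : D) * ((σd ^ p.2 : Dˣ) : D)) (T : Finset ℤ) (φ : ℤ → LaurentPolynomial ℂ) (j : ℤ) :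
    coeffA B (CF zd σd T φ) j = if j ∈ T then φ j else 0 := by
  classical
  rw [CF_eq_sum_attach]
  by_cases hj : j ∈ T
  · rw [if_pos hj]
    exact coeffA_sum_eq zd σd B hB (fun i : {x // x ∈ T} => i.1)
      Subtype.val_injective (fun i => φ i.1) ⟨j, hj⟩
  · rw [if_neg hj]
    exact coeffA_sum_ne zd σd B hB (fun i : {x // x ∈ T} => i.1)
      (fun i => φ i.1) j (fun i hh => hj (hh ▸ i.2))

lemma mem_SS_CF (hB : ∀ p : ℤ × ℤ, B p = ((zd ^ p.1 : Dˣ) : D) * ((σd ^ p.2 : Dˣ) : D)) {T : Finset ℤ} {φ : ℤ → LaurentPolynomial ℂ} {j : ℤ}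
    (hj : j ∈ SS B (CF zd σd T φ)) : j ∈ T := by
  by_contra h
  have := (mem_SS B).mp hj
  rw [coeffA_CF zd σd B hB, if_neg h] at this
  exact this rfl

lemma recon (hB : ∀ p : ℤ × ℤ, B p = ((zd ^ p.1 : Dˣ) : D) * ((σd ^ p.2 : Dˣ) : D)) {x : D} {T : Finset ℤ} (hT : SS B x ⊆ T) :
    CF zd σd T (coeffA B x) = x := by
  have h : ∀ j, coeffA B (CF zd σd T (coeffA B x) - x) j = 0 := by
    intro j
    rw [coeffA_sub, coeffA_CF zd σd B hB]
    by_cases hj : j ∈ T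
    · rw [if_pos hj, sub_self]
    · rw [if_neg hj]
      have h0 : coeffA B x j = 0 := by
        by_contra h0
        exact hj (hT ((mem_SS B).mpr h0))
      rw [h0, sub_zero]
  exact sub_eq_zero.mp (eq_zero_of_coeffA B h)

lemma mulA_CF (g : LaurentPolynomial ℂ) (T : Finset ℤ) (φ : ℤ → LaurentPolynomial ℂ) :
    embA zd g * CF zd σd T φ = CF zd σd T (fun j => g * φ j) := by
  rw [CF, CF, Finset.mul_sum]
  refine Finset.sum_congr rfl fun j _ => ?_
  rw [← mul_assoc, ← embA_mul]

section withq
variable (hq0 : q ≠ 0) (hrel : (σd : D) * (zd : D) = q • ((zd : D) * (σd : D)))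
include hq0 hrel

lemma sigma_emb (b : ℤ) (c : LaurentPolynomial ℂ) (j : ℤ) :
    Z σd b * (embA zd c * Z σd j) = embA zd (tw q b c) * Z σd (b + j) := by
  induction c using AddMonoidAlgebra.induction with
  | zero => rw [embA_zero, zero_mul, mul_zero, tw_zero, embA_zero, zero_mul]
  | single_add a e f _ _ ih =>
      rw [embA_add, add_mul, mul_add, ih, tw_add, embA_add, add_mul]
      congr 1
      rw [embA_single, tw_single, embA_single, smul_mul_assoc, mul_smul_comm,
        Sp_Z_Sp hq0 hrel, smul_smul, smul_mul_assoc, mul_comm e]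

lemma sigma_CF (b : ℤ) (T : Finset ℤ) (φ : ℤ → LaurentPolynomial ℂ) :
    Z σd b * CF zd σd T φ =
      CF zd σd (T.map (Equiv.addLeft b).toEmbedding) (fun j => tw q b (φ (j - b))) := by
  rw [CF, CF, Finset.mul_sum, Finset.sum_map]
  refine Finset.sum_congr rfl fun j hj => ?_
  rw [show ((Equiv.addLeft b).toEmbedding j) = b + j from rfl]
  rw [sigma_emb zd σd hq0 hrel b (φ j) j, add_sub_cancel_left]

end withq
end basisSec
end Stmt6
namespace Stmt6
variable {D : Type*} [Ring D] [Algebra ℂ D]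

section reduce
variable {q : ℂ} {zd σd : Dˣ} {B : Module.Basis (ℤ × ℤ) ℂ D} {I : Submodule D D}
  {w : D} {mw Mw : ℤ}
variable (hq0 : q ≠ 0) (hrel : (σd : D) * (zd : D) = q • ((zd : D) * (σd : D)))
  (hB : ∀ p : ℤ × ℤ, B p = ((zd ^ p.1 : Dˣ) : D) * ((σd ^ p.2 : Dˣ) : D))
  (hwI : w ∈ I) (hWsub : SS B w ⊆ Finset.Icc mw Mw)
  (hψm : coeffA B w mw ≠ 0) (hψM : coeffA B w Mw ≠ 0) (hmM : mw ≤ Mw)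

include hq0 hrel hB hwI hWsub hmM in
lemma reduce_step (b : ℤ) (n : ℤ) (e : ℤ) (he : e ∈ Finset.Icc mw Mw)
    (hce : coeffA B w e ≠ 0) (hne : n = e + b) (d : D) (hnS : n ∈ SS B d) :
    ∃ d₁ : D,
      embA zd (tw q b (coeffA B w e)) * d - d₁ ∈ I ∧
      tw q b (coeffA B w e) ≠ 0 ∧
      (∀ j ∈ SS B d₁, (j ∈ SS B d ∨ (mw + b ≤ j ∧ j ≤ Mw + b)) ∧ j ≠ n) := by
  classical
  set Tb : Finset ℤ := (Finset.Icc mw Mw).map (Equiv.addLeft b).toEmbedding with hTb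
  have hmemTb : ∀ j : ℤ, j ∈ Tb ↔ mw + b ≤ j ∧ j ≤ Mw + b := by
    intro j
    rw [hTb, Finset.mem_map_equiv]
    simp only [Equiv.addLeft_symm, Equiv.coe_addLeft, Finset.mem_Icc]
    omega
  have hwb : Z σd b * w = CF zd σd Tb (fun j => tw q b (coeffA B w (j - b))) := by
    conv_lhs => rw [← recon zd σd B hB hWsub]
    rw [sigma_CF zd σd hq0 hrel]
  set u : LaurentPolynomial ℂ := tw q b (coeffA B w e) with hu
  have hu0 : u ≠ 0 := tw_ne_zero hq0 b hce
  refine ⟨embA zd u * d - embA zd (coeffA B d n) * (Z σd b * w), ?_, hu0, ?_⟩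
  · have h3 : Z σd b * w ∈ I := by
      have := I.smul_mem (Z σd b) hwI; rwa [smul_eq_mul] at this
    have h4 := I.smul_mem (embA zd (coeffA B d n)) h3
    rw [smul_eq_mul] at h4
    have heq : embA zd u * d - (embA zd u * d - embA zd (coeffA B d n) * (Z σd b * w))
        = embA zd (coeffA B d n) * (Z σd b * w) := sub_sub_cancel _ _
    rw [heq]
    exact h4
  · have h1 : embA zd u * d = CF zd σd (SS B d) (fun j => u * coeffA B d j) := by
      conv_lhs => rw [← recon zd σd B hB (subset_refl (SS B d))]
      rw [mulA_CF]
    have h2 : embA zd (coeffA B d n) * (Z σd b * w)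
        = CF zd σd Tb (fun j => coeffA B d n * tw q b (coeffA B w (j - b))) := by
      rw [hwb, mulA_CF]
    have hc : ∀ j, coeffA B (embA zd u * d - embA zd (coeffA B d n) * (Z σd b * w)) j =
        (if j ∈ SS B d then u * coeffA B d j else 0) -
        (if j ∈ Tb then coeffA B d n * tw q b (coeffA B w (j - b)) else 0) := by
      intro j
      rw [coeffA_sub, h1, h2, coeffA_CF zd σd B hB, coeffA_CF zd σd B hB]
    have hnTb : n ∈ Tb := by
      rw [hmemTb]
      rw [Finset.mem_Icc] at he
      omega
    have hcn : coeffA B (embA zd u * d - embA zd (coeffA B d n) * (Z σd b * w)) n = 0 := by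
      rw [hc n, if_pos hnS, if_pos hnTb]
      have h5 : n - b = e := by omega
      rw [h5, hu, mul_comm, sub_self]
    intro j hj
    have hjne := (mem_SS B).mp hj
    constructor
    · by_contra hcon
      push_neg at hcon
      apply hjne
      rw [hc j, if_neg hcon.1, if_neg ?_, sub_self]
      rw [hmemTb]
      intro hcc
      have := hcon.2 hcc.1
      omega
    · rintro rfl
      exact hjne hcn

include hq0 hrel hB hwI hWsub hψM hmM in
lemma reduce_top : ∀ (k : ℕ) (d : D), (∀ j ∈ SS B d, j < Mw + k) →
    ∃ u : LaurentPolynomial ℂ, u ≠ 0 ∧ ∃ d' : D,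
      (∀ j ∈ SS B d', j < Mw) ∧ embA zd u * d - d' ∈ I := by
  intro k
  induction k with
  | zero =>
      intro d hd
      refine ⟨1, one_ne_zero, d, ?_, ?_⟩
      · intro j hj; have := hd j hj; omega
      · rw [embA_one, one_mul, sub_self]; exact I.zero_mem
  | succ k IH =>
      intro d hd
      by_cases hcase : ∀ j ∈ SS B d, j < Mw + k
      · exact IH d hcase
      · push_neg at hcase
        obtain ⟨n, hnS, hn⟩ := hcase
        have hnn : n = Mw + k := by have := hd n hnS; omega
        have hMicc : Mw ∈ Finset.Icc mw Mw := by rw [Finset.mem_Icc]; omega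
        obtain ⟨d₁, hmem₁, hu0, hS₁⟩ := reduce_step hq0 hrel hB hwI hWsub hmM
          (k : ℤ) n Mw hMicc hψM (by omega) d hnS
        have hbd : ∀ j ∈ SS B d₁, j < Mw + k := by
          intro j hj
          obtain ⟨hj1, hj2⟩ := hS₁ j hj
          rcases hj1 with h | h
          · have := hd j h; omega
          · omega
        obtain ⟨u', hu', d'', hd'', hmem⟩ := IH d₁ hbd
        refine ⟨u' * tw q (k : ℤ) (coeffA B w Mw), mul_ne_zero hu' hu0, d'', hd'', ?_⟩
        have heq : embA zd (u' * tw q (k : ℤ) (coeffA B w Mw)) * d - d'' =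
            embA zd u' * (embA zd (tw q (k : ℤ) (coeffA B w Mw)) * d - d₁)
              + (embA zd u' * d₁ - d'') := by
          rw [embA_mul]; noncomm_ring
        rw [heq]
        refine I.add_mem ?_ hmem
        have := I.smul_mem (embA zd u') hmem₁
        rwa [smul_eq_mul] at this

include hq0 hrel hB hwI hWsub hψm hmM in
lemma reduce_bot : ∀ (k : ℕ) (d : D), (∀ j ∈ SS B d, j < Mw) →
    (∀ j ∈ SS B d, mw ≤ j + k) →
    ∃ u : LaurentPolynomial ℂ, u ≠ 0 ∧ ∃ d' : D,
      (∀ j ∈ SS B d', mw ≤ j ∧ j < Mw) ∧ embA zd u * d - d' ∈ I := by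
  intro k
  induction k with
  | zero =>
      intro d hd hd2
      refine ⟨1, one_ne_zero, d, ?_, ?_⟩
      · intro j hj
        refine ⟨?_, hd j hj⟩
        have := hd2 j hj; omega
      · rw [embA_one, one_mul, sub_self]; exact I.zero_mem
  | succ k IH =>
      intro d hd hd2
      by_cases hcase : ∀ j ∈ SS B d, mw ≤ j + k
      · exact IH d hd hcase
      · push_neg at hcase
        obtain ⟨n, hnS, hn⟩ := hcase
        have hnn : n = mw - k - 1 := by have := hd2 n hnS; omega
        have hmicc : mw ∈ Finset.Icc mw Mw := by rw [Finset.mem_Icc]; omega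
        obtain ⟨d₁, hmem₁, hu0, hS₁⟩ := reduce_step hq0 hrel hB hwI hWsub hmM
          (-((k : ℤ) + 1)) n mw hmicc hψm (by omega) d hnS
        have hbd : ∀ j ∈ SS B d₁, j < Mw := by
          intro j hj
          obtain ⟨hj1, hj2⟩ := hS₁ j hj
          rcases hj1 with h | h
          · exact hd j h
          · omega
        have hbd2 : ∀ j ∈ SS B d₁, mw ≤ j + k := by
          intro j hj
          obtain ⟨hj1, hj2⟩ := hS₁ j hj
          rcases hj1 with h | h
          · have := hd2 j h; omega
          · omega
        obtain ⟨u', hu', d'', hd'', hmem⟩ := IH d₁ hbd hbd2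
        refine ⟨u' * tw q (-((k : ℤ) + 1)) (coeffA B w mw), mul_ne_zero hu' hu0, d'', hd'', ?_⟩
        have heq : embA zd (u' * tw q (-((k : ℤ) + 1)) (coeffA B w mw)) * d - d'' =
            embA zd u' * (embA zd (tw q (-((k : ℤ) + 1)) (coeffA B w mw)) * d - d₁)
              + (embA zd u' * d₁ - d'') := by
          rw [embA_mul]; noncomm_ring
        rw [heq]
        refine I.add_mem ?_ hmem
        have := I.smul_mem (embA zd u') hmem₁
        rwa [smul_eq_mul] at this

include hq0 hrel hB hwI hWsub hψm hψM hmM in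
lemma divide (d : D) :
    ∃ u : LaurentPolynomial ℂ, u ≠ 0 ∧ ∃ c : ℤ → LaurentPolynomial ℂ,
      embA zd u * d - CF zd σd (Finset.Ico mw Mw) c ∈ I := by
  classical
  set k₁ : ℕ := (SS B d).sup (fun j => (j + 1 - Mw).toNat) with hk₁
  have hyp1 : ∀ j ∈ SS B d, j < Mw + k₁ := by
    intro j hj
    have h1 : (j + 1 - Mw).toNat ≤ k₁ := by
      rw [hk₁]; exact Finset.le_sup (f := fun j => (j + 1 - Mw).toNat) hj
    have h2 := Int.self_le_toNat (j + 1 - Mw)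
    omega
  obtain ⟨u₁, hu₁, d₁, hd₁, hmem₁⟩ := reduce_top hq0 hrel hB hwI hWsub hψM hmM k₁ d hyp1
  set k₂ : ℕ := (SS B d₁).sup (fun j => (mw - j).toNat) with hk₂
  have hyp2 : ∀ j ∈ SS B d₁, mw ≤ j + k₂ := by
    intro j hj
    have h1 : (mw - j).toNat ≤ k₂ := by
      rw [hk₂]; exact Finset.le_sup (f := fun j => (mw - j).toNat) hj
    have h2 := Int.self_le_toNat (mw - j)
    omega
  obtain ⟨u₂, hu₂, d₂, hd₂, hmem₂⟩ := reduce_bot hq0 hrel hB hwI hWsub hψm hmM k₂ d₁ hd₁ hyp2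
  refine ⟨u₂ * u₁, mul_ne_zero hu₂ hu₁, coeffA B d₂, ?_⟩
  have hrecon : CF zd σd (Finset.Ico mw Mw) (coeffA B d₂) = d₂ := by
    apply recon zd σd B hB
    intro j hj
    rw [Finset.mem_Ico]
    exact hd₂ j hj
  rw [hrecon]
  have heq : embA zd (u₂ * u₁) * d - d₂ =
      embA zd u₂ * (embA zd u₁ * d - d₁) + (embA zd u₂ * d₁ - d₂) := by
    rw [embA_mul]; noncomm_ring
  rw [heq]
  refine I.add_mem ?_ hmem₂
  have := I.smul_mem (embA zd u₂) hmem₁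
  rwa [smul_eq_mul] at this

end reduce
end Stmt6
namespace Stmt6
variable {D : Type*} [Ring D] [Algebra ℂ D]

lemma sigmaDeg_eq (B : Module.Basis (ℤ × ℤ) ℂ D) {x : D} (hx : x ≠ 0) :
    sigmaDeg B x = (SS B x).max' (SS_nonempty B hx) - (SS B x).min' (SS_nonempty B hx) := by
  have h := SS_nonempty B hx
  rw [sigmaDeg, show (B.repr x).support.image Prod.snd = SS B x from rfl,
    ← Finset.coe_max' h, ← Finset.coe_min' h, WithBot.unbotD_coe, WithTop.untopD_coe]

end Stmt6

open Stmt6 in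
theorem stmt_6' (q : ℂ) (hq : ∀ n : ℤ, n ≠ 0 → q ^ n ≠ 1)
    (D : Type*) [Ring D] [Algebra ℂ D] (zd σd : Dˣ)
    (hrel : (σd : D) * (zd : D) = q • ((zd : D) * (σd : D)))
    (B : Module.Basis (ℤ × ℤ) ℂ D)
    (hB : ∀ p : ℤ × ℤ, B p = ((zd ^ p.1 : Dˣ) : D) * ((σd ^ p.2 : Dˣ) : D))
    (I : Submodule D D) (hI : I ≠ ⊥) :
    (∃ v : Fin (sInf {n : ℕ | ∃ w ∈ I, w ≠ 0 ∧ (sigmaDeg B w).toNat = n}) → D ⧸ I,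
      AIndep zd I v) ∧
    ∀ v : Fin (sInf {n : ℕ | ∃ w ∈ I, w ≠ 0 ∧ (sigmaDeg B w).toNat = n} + 1) → D ⧸ I,
      ¬ AIndep zd I v := by
  classical
  haveI : Nontrivial D := nontrivial_of_ne (B (0,0)) 0 (B.ne_zero (0,0))
  have hq0 : q ≠ 0 := by
    intro h0
    have h1 : (σd : D) * (zd : D) = 0 := by rw [hrel, h0, zero_smul]
    have h2 : ((σd * zd : Dˣ) : D) = 0 := by rw [Units.val_mul, h1]
    have h3 : (1 : D) = 0 := by
      calc (1 : D) = (((σd * zd)⁻¹ : Dˣ) : D) * ((σd * zd : Dˣ) : D) := by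
            rw [← Units.val_mul, inv_mul_cancel, Units.val_one]
        _ = 0 := by rw [h2, mul_zero]
    exact one_ne_zero h3
  set SDeg : Set ℕ := {n : ℕ | ∃ w ∈ I, w ≠ 0 ∧ (sigmaDeg B w).toNat = n} with hSDeg
  have hSne : SDeg.Nonempty := by
    obtain ⟨x, hxI, hx0⟩ := (Submodule.ne_bot_iff I).mp hI
    exact ⟨(sigmaDeg B x).toNat, x, hxI, hx0, rfl⟩
  set r : ℕ := sInf SDeg with hr
  have hrmem : r ∈ SDeg := by rw [hr]; exact Nat.sInf_mem hSne
  obtain ⟨w, hwI, hw0, hwdeg⟩ := hrmem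
  have hlb : ∀ x, x ∈ I → x ≠ 0 → r ≤ (sigmaDeg B x).toNat := by
    intro x hx hx0
    rw [hr]
    exact Nat.sInf_le ⟨x, hx, hx0, rfl⟩
  have hwne := SS_nonempty B hw0
  set mw : ℤ := (SS B w).min' hwne with hmw
  set Mw : ℤ := (SS B w).max' hwne with hMw
  have hmM : mw ≤ Mw := Finset.min'_le _ _ (Finset.max'_mem _ hwne)
  have hdegw : sigmaDeg B w = Mw - mw := sigmaDeg_eq B hw0
  have hMmr : Mw = mw + r := by rw [hdegw] at hwdeg; omega
  have hWsub : SS B w ⊆ Finset.Icc mw Mw := by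
    intro j hj
    rw [Finset.mem_Icc]
    exact ⟨Finset.min'_le _ _ hj, Finset.le_max' _ _ hj⟩
  have hψm : coeffA B w mw ≠ 0 := (mem_SS B).mp (Finset.min'_mem _ hwne)
  have hψM : coeffA B w Mw ≠ 0 := (mem_SS B).mp (Finset.max'_mem _ hwne)
  constructor
  · -- independence of size r
    refine ⟨fun i => Submodule.Quotient.mk (Z σd (mw + (i : ℤ))), ?_⟩
    intro g hsum i
    by_contra hgi
    have hinj : Function.Injective (fun i : Fin r => mw + (i : ℤ)) := by
      intro i i' h
      simp only at h
      have : i.val = i'.val := by omega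
      exact Fin.ext this
    set x : D := ∑ i, embA zd (g i) * Z σd (mw + (i : ℤ)) with hx
    have hxI : x ∈ I := by
      have hmk : I.mkQ x = 0 := by
        rw [hx, map_sum]
        have hst : ∀ i : Fin r, I.mkQ (embA zd (g i) * Z σd (mw + (i:ℤ)))
            = embA zd (g i) • (Submodule.Quotient.mk (Z σd (mw + (i:ℤ))) : D ⧸ I) := by
          intro i
          rw [← smul_eq_mul, map_smul, Submodule.mkQ_apply]
        rw [Finset.sum_congr rfl (fun i _ => hst i)]
        exact hsum
      rw [← Submodule.Quotient.mk_eq_zero I, ← Submodule.mkQ_apply]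
      exact hmk
    have hcoeff : ∀ i : Fin r, coeffA B x (mw + (i:ℤ)) = g i := by
      intro i
      rw [hx]
      exact coeffA_sum_eq zd σd B hB _ hinj g i
    have hx0 : x ≠ 0 := by
      intro h0
      apply hgi
      have h1 := hcoeff i
      rw [h0, coeffA_zero] at h1
      exact h1.symm
    have hSx : ∀ j ∈ SS B x, ∃ i : Fin r, mw + (i:ℤ) = j := by
      intro j hj
      by_contra hno
      push_neg at hno
      exact (mem_SS B).mp hj (by rw [hx]; exact coeffA_sum_ne zd σd B hB _ g j hno)
    have hxne := SS_nonempty B hx0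
    have hdeg := sigmaDeg_eq B hx0
    have h1 : (SS B x).max' hxne ≤ mw + r - 1 := by
      obtain ⟨i2, hi2⟩ := hSx _ (Finset.max'_mem _ hxne)
      have := i2.isLt
      omega
    have h2 : mw ≤ (SS B x).min' hxne := by
      obtain ⟨i2, hi2⟩ := hSx _ (Finset.min'_mem _ hxne)
      omega
    have h3 := hlb x hxI hx0
    have h4 : 1 ≤ r := i.pos
    rw [hdeg] at h3
    omega
  · -- no independent family of size r + 1
    intro v hAI
    have hvlift : ∀ i : Fin (r+1), ∃ d : D, Submodule.Quotient.mk d = v i :=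
      fun i => Submodule.Quotient.mk_surjective I (v i)
    choose dd hdd using hvlift
    have hdiv : ∀ i : Fin (r+1), ∃ u : LaurentPolynomial ℂ, u ≠ 0 ∧
        ∃ c : ℤ → LaurentPolynomial ℂ,
          embA zd u * dd i - CF zd σd (Finset.Ico mw Mw) c ∈ I :=
      fun i => divide hq0 hrel hB hwI hWsub hψm hψM hmM (dd i)
    choose uu huu cc hcc using hdiv
    set CM : Fin (r+1) → (Fin r → LaurentPolynomial ℂ) :=
      fun i j => cc i (mw + (j:ℤ)) with hCM
    have hnotLI : ¬ LinearIndependent (LaurentPolynomial ℂ) CM := by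
      intro hLI
      have h5 := hLI.fintype_card_le_finrank
      rw [Module.finrank_pi] at h5
      simp only [Fintype.card_fin] at h5
      omega
    obtain ⟨lam, hlam, i₀, hi₀⟩ := Fintype.not_linearIndependent_iff.mp hnotLI
    have hz : ∀ j ∈ Finset.Ico mw Mw, (∑ i, lam i * cc i j) = 0 := by
      intro j hj
      rw [Finset.mem_Ico] at hj
      have hjr : (j - mw).toNat < r := by omega
      have hjeq : mw + (((⟨(j - mw).toNat, hjr⟩ : Fin r) : ℤ)) = j := by
        simp only [Fin.val_mk]
        omega
      have h6 := congrFun hlam (⟨(j - mw).toNat, hjr⟩ : Fin r)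
      simp only [Finset.sum_apply, Pi.smul_apply, smul_eq_mul, Pi.zero_apply] at h6
      calc (∑ i, lam i * cc i j)
          = ∑ i, lam i * CM i (⟨(j - mw).toNat, hjr⟩ : Fin r) := by
            refine Finset.sum_congr rfl fun i2 _ => ?_
            rw [hCM]
            simp only
            rw [hjeq]
        _ = 0 := h6
    have hrelsum : ∑ i, embA zd (lam i * uu i) • v i = 0 := by
      have hstep : ∀ i, embA zd (lam i * uu i) • v i
          = I.mkQ (CF zd σd (Finset.Ico mw Mw) (fun j => lam i * cc i j)) := by
        intro i
        rw [← hdd i, ← Submodule.mkQ_apply, ← map_smul, smul_eq_mul, embA_mul, mul_assoc]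
        have hmod : I.mkQ (embA zd (lam i) * (embA zd (uu i) * dd i))
            = I.mkQ (embA zd (lam i) * CF zd σd (Finset.Ico mw Mw) (cc i)) := by
          rw [← sub_eq_zero, ← map_sub, Submodule.mkQ_apply, Submodule.Quotient.mk_eq_zero]
          have h7 : embA zd (lam i) * (embA zd (uu i) * dd i)
              - embA zd (lam i) * CF zd σd (Finset.Ico mw Mw) (cc i)
              = embA zd (lam i) * (embA zd (uu i) * dd i
                  - CF zd σd (Finset.Ico mw Mw) (cc i)) := by noncomm_ring
          rw [h7]
          have h8 := I.smul_mem (embA zd (lam i)) (hcc i)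
          rwa [smul_eq_mul] at h8
        rw [hmod, mulA_CF]
      rw [Finset.sum_congr rfl (fun i _ => hstep i), ← map_sum]
      have hzero : (∑ i, CF zd σd (Finset.Ico mw Mw) (fun j => lam i * cc i j)) = (0 : D) := by
        simp only [CF]
        rw [Finset.sum_comm]
        refine Finset.sum_eq_zero fun j hj => ?_
        rw [← Finset.sum_mul, ← embA_sum, hz j hj, embA_zero, zero_mul]
      rw [hzero, map_zero]
    have hfin := hAI (fun i => lam i * uu i) hrelsum i₀
    exact absurd hfin (mul_ne_zero hi₀ (huu i₀))

/-- Let `q ∈ ℂ*` not be a root of unity, let `I ⊆ A_q` be a nonzero left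
ideal of the quantum torus and `M = A_q/I`.  Then the rank of `M` as a module over
`A = ℂ[z,z⁻¹]` equals the minimum `r` of `deg_σ(w)` over nonzero `w ∈ I`: there is an
`A`-linearly independent family in `M` of size `r` but none of size `r + 1`.
In particular `rk_A(M)` is finite. -/
theorem stmt_6 (q : ℂ) (hq : ∀ n : ℤ, n ≠ 0 → q ^ n ≠ 1)
    (D : Type*) [Ring D] [Algebra ℂ D] (zd σd : Dˣ)
    (hrel : (σd : D) * (zd : D) = q • ((zd : D) * (σd : D)))
    (B : Module.Basis (ℤ × ℤ) ℂ D)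
    (hB : ∀ p : ℤ × ℤ, B p = ((zd ^ p.1 : Dˣ) : D) * ((σd ^ p.2 : Dˣ) : D))
    (I : Submodule D D) (hI : I ≠ ⊥) :
    (∃ v : Fin (sInf {n : ℕ | ∃ w ∈ I, w ≠ 0 ∧ (sigmaDeg B w).toNat = n}) → D ⧸ I,
      AIndep zd I v) ∧
    ∀ v : Fin (sInf {n : ℕ | ∃ w ∈ I, w ≠ 0 ∧ (sigmaDeg B w).toNat = n} + 1) → D ⧸ I,
      ¬ AIndep zd I v := by
  exact stmt_6' q hq D zd σd hrel B hB I hI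

end
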